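/- The function p ↦ exp(−λ p) * F(p) is strictly decreasing on [0,∞); equivalently, the expected cost U_OFF(p) = K * (1 − exp(−λ p) * F(p)) of playing OFF is strictly increasing in the population profile p on [0,∞). -/

import Mathlib

open Finset

/-- coefficient of `p^(∑ x t)` -/
private noncomputable def aa {T : ℕ} (lam : ℝ) (r : Fin T → ℝ) (x : Fin T → ℕ) : ℝ :=
  ∏ t, (lam * r t) ^ (x t) / (Nat.factorial (x t) : ℝ)

private def nn {T : ℕ} (x : Fin T → ℕ) : ℕ := ∑ t, x t

private lemma aa_pos {T : ℕ} {lam : ℝ} (hlam : 0 < lam) {r : Fin T → ℝ} (hr : ∀ t, 0 < r t)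
    (x : Fin T → ℕ) : 0 < aa lam r x := by
  unfold aa
  apply Finset.prod_pos
  intro t _
  have h1 : 0 < lam * r t := mul_pos hlam (hr t)
  have h2 : (0 : ℝ) < (Nat.factorial (x t) : ℝ) := by
    exact_mod_cast Nat.factorial_pos (x t)
  exact div_pos (pow_pos h1 _) h2

private lemma prod_update_eq {T : ℕ} (G : Fin T → ℕ → ℝ) (x : Fin T → ℕ) (t : Fin T) (v : ℕ) :
    (fun s => G s (Function.update x t v s)) = Function.update (fun s => G s (x s)) t (G t v) := by
  funext s
  by_cases h : s = t
  · subst h; simp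
  · simp [Function.update_apply, h]

private lemma aa_update {T : ℕ} (lam : ℝ) (r : Fin T → ℝ) (x : Fin T → ℕ) (t : Fin T) :
    aa lam r (Function.update x t (x t + 1)) * ((x t : ℝ) + 1) = lam * r t * aa lam r x := by
  unfold aa
  set G : Fin T → ℕ → ℝ := fun s k => (lam * r s) ^ k / (Nat.factorial k : ℝ) with hG
  have h1 : ∀ s, (lam * r s) ^ (Function.update x t (x t + 1) s) /
      (Nat.factorial (Function.update x t (x t + 1) s) : ℝ)
      = Function.update (fun s => G s (x s)) t (G t (x t + 1)) s := by
    intro s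
    have := congrFun (prod_update_eq G x t (x t + 1)) s
    simpa [hG] using this
  rw [Finset.prod_congr rfl (fun s _ => h1 s), Finset.prod_update_of_mem (Finset.mem_univ t)]
  have h2 : ∏ s, (lam * r s) ^ (x s) / (Nat.factorial (x s) : ℝ)
      = G t (x t) * ∏ s ∈ Finset.univ \ {t}, G s (x s) :=
    Finset.prod_eq_mul_prod_sdiff_singleton_of_mem (Finset.mem_univ t) _
  rw [h2]
  have key : G t (x t + 1) * ((x t : ℝ) + 1) = lam * r t * G t (x t) := by
    simp only [hG, Nat.factorial_succ, pow_succ]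
    have hfac : ((Nat.factorial (x t) : ℝ)) ≠ 0 := by
      exact_mod_cast (Nat.factorial_pos (x t)).ne'
    push_cast
    field_simp
  calc G t (x t + 1) * (∏ s ∈ Finset.univ \ {t}, G s (x s)) * ((x t : ℝ) + 1)
      = (G t (x t + 1) * ((x t : ℝ) + 1)) * ∏ s ∈ Finset.univ \ {t}, G s (x s) := by ring
    _ = (lam * r t * G t (x t)) * ∏ s ∈ Finset.univ \ {t}, G s (x s) := by rw [key]
    _ = lam * r t * (G t (x t) * ∏ s ∈ Finset.univ \ {t}, G s (x s)) := by ring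

private lemma nn_update {T : ℕ} (x : Fin T → ℕ) (t : Fin T) :
    nn (Function.update x t (x t + 1)) = nn x + 1 := by
  unfold nn
  rw [Finset.sum_update_of_mem (Finset.mem_univ t)]
  have : ∑ s, x s = x t + ∑ s ∈ Finset.univ \ {t}, x s :=
    Finset.sum_eq_add_sum_sdiff_singleton_of_mem (Finset.mem_univ t) _
  omega

private lemma key_ineq {T : ℕ} (hT : 1 ≤ T) {lam : ℝ} (hlam : 0 < lam)
    {r : Fin T → ℝ} (hr : ∀ t, 0 < r t) (hrsum : ∑ t, r t = 1)
    (A : Finset (Fin T → ℕ)) (hA0 : (0 : Fin T → ℕ) ∈ A)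
    (hdc : ∀ x ∈ A, ∀ t : Fin T, x t ≠ 0 → Function.update x t (x t - 1) ∈ A)
    {p : ℝ} (hp : 0 < p) :
    ∑ x ∈ A, aa lam r x * ((nn x : ℝ) * p ^ (nn x - 1))
      < lam * ∑ x ∈ A, aa lam r x * p ^ (nn x) := by
  classical
  set f : (Fin T → ℕ) × Fin T → ℝ :=
    fun q => lam * r q.2 * aa lam r q.1 * p ^ (nn q.1) with hf
  set g : (Fin T → ℕ) × Fin T → ℝ :=
    fun q => aa lam r q.1 * (q.1 q.2 : ℝ) * p ^ (nn q.1 - 1) with hg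
  -- RHS as a sum over pairs
  have hRHS : lam * ∑ x ∈ A, aa lam r x * p ^ (nn x) = ∑ q ∈ A ×ˢ Finset.univ, f q := by
    rw [Finset.sum_product, Finset.mul_sum]
    apply Finset.sum_congr rfl
    intro x _
    have hl : ∑ t : Fin T, lam * r t = lam := by
      rw [← Finset.mul_sum, hrsum, mul_one]
    calc lam * (aa lam r x * p ^ nn x)
        = (∑ t : Fin T, lam * r t) * (aa lam r x * p ^ nn x) := by rw [hl]
      _ = ∑ t : Fin T, f (x, t) := by
          rw [Finset.sum_mul]; apply Finset.sum_congr rfl; intro t _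
          simp only [hf]; ring
  -- LHS as a sum over pairs
  have hLHS : ∑ x ∈ A, aa lam r x * ((nn x : ℝ) * p ^ (nn x - 1))
      = ∑ q ∈ A ×ˢ Finset.univ, g q := by
    rw [Finset.sum_product]
    apply Finset.sum_congr rfl
    intro x _
    have hcast : ((nn x : ℝ)) = ∑ t : Fin T, (x t : ℝ) := by
      unfold nn; push_cast; rfl
    rw [hcast, Finset.sum_mul, Finset.mul_sum]
    apply Finset.sum_congr rfl
    intro t _
    simp only [hg]; ring
  rw [hRHS, hLHS]
  -- restrict LHS to nonzero coordinates
  have hfilter : ∑ q ∈ A ×ˢ Finset.univ, g q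
      = ∑ q ∈ (A ×ˢ Finset.univ).filter (fun q => q.1 q.2 ≠ 0), g q := by
    symm
    apply Finset.sum_filter_of_ne
    intro q _ hne
    intro h0
    apply hne
    simp [hg, h0]
  rw [hfilter]
  -- bijection onto pairs (x,t) with update x t (x t + 1) ∈ A
  have hbij : ∑ q ∈ (A ×ˢ Finset.univ).filter (fun q => q.1 q.2 ≠ 0), g q
      = ∑ q ∈ (A ×ˢ Finset.univ).filter
          (fun q => Function.update q.1 q.2 (q.1 q.2 + 1) ∈ A), f q := by
    apply Finset.sum_nbij'
      (i := fun q => (Function.update q.1 q.2 (q.1 q.2 - 1), q.2))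
      (j := fun q => (Function.update q.1 q.2 (q.1 q.2 + 1), q.2))
    · intro q hq
      simp only [Finset.mem_filter, Finset.mem_product, Finset.mem_univ, and_true] at hq ⊢
      obtain ⟨hqA, hq0⟩ := hq
      refine ⟨hdc q.1 hqA q.2 hq0, ?_⟩
      have h1 : Function.update q.1 q.2 (q.1 q.2 - 1) q.2 = q.1 q.2 - 1 := by simp
      rw [h1]
      have h2 : q.1 q.2 - 1 + 1 = q.1 q.2 := Nat.succ_pred_eq_of_ne_zero hq0
      rw [h2, Function.update_idem, Function.update_eq_self]
      exact hqA
    · intro q hq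
      simp only [Finset.mem_filter, Finset.mem_product, Finset.mem_univ, and_true] at hq ⊢
      obtain ⟨hqA, hup⟩ := hq
      refine ⟨hup, ?_⟩
      simp
    · intro q hq
      simp only [Finset.mem_filter, Finset.mem_product, Finset.mem_univ, and_true] at hq
      obtain ⟨hqA, hq0⟩ := hq
      have h1 : Function.update q.1 q.2 (q.1 q.2 - 1) q.2 = q.1 q.2 - 1 := by simp
      have hsp : q.1 q.2 - 1 + 1 = q.1 q.2 := by omega
      rw [Prod.ext_iff]
      refine ⟨?_, rfl⟩
      show Function.update (Function.update q.1 q.2 (q.1 q.2 - 1)) q.2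
          (Function.update q.1 q.2 (q.1 q.2 - 1) q.2 + 1) = q.1
      rw [h1, Function.update_idem, hsp, Function.update_eq_self]
    · intro q hq
      have h1 : Function.update q.1 q.2 (q.1 q.2 + 1) q.2 = q.1 q.2 + 1 := by simp
      rw [Prod.ext_iff]
      refine ⟨?_, rfl⟩
      show Function.update (Function.update q.1 q.2 (q.1 q.2 + 1)) q.2
          (Function.update q.1 q.2 (q.1 q.2 + 1) q.2 - 1) = q.1
      rw [h1, Function.update_idem, Nat.add_sub_cancel, Function.update_eq_self]
    · intro q hq
      simp only [Finset.mem_filter, Finset.mem_product, Finset.mem_univ, and_true] at hq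
      obtain ⟨hqA, hq0⟩ := hq
      -- g q = f (update q.1 q.2 (q.1 q.2 - 1), q.2)
      set y : Fin T → ℕ := Function.update q.1 q.2 (q.1 q.2 - 1) with hy
      have hyt : y q.2 = q.1 q.2 - 1 := by simp [hy]
      have hsp : q.1 q.2 - 1 + 1 = q.1 q.2 := by omega
      have hx : Function.update y q.2 (y q.2 + 1) = q.1 := by
        rw [hyt, hsp, hy, Function.update_idem, Function.update_eq_self]
      have hnn : nn q.1 = nn y + 1 := by
        rw [← hx, nn_update]
      have haa := aa_update lam r y q.2
      rw [hx] at haa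
      have hcast : ((y q.2 : ℝ) + 1) = (q.1 q.2 : ℝ) := by
        rw [hyt]
        exact_mod_cast congrArg (Nat.cast : ℕ → ℝ) hsp
      rw [hcast] at haa
      show aa lam r q.1 * (q.1 q.2 : ℝ) * p ^ (nn q.1 - 1)
        = lam * r q.2 * aa lam r y * p ^ (nn y)
      rw [hnn]
      simp only [Nat.add_sub_cancel]
      rw [← haa]
  rw [hbij]
  -- strict inequality: some boundary pair is missing
  obtain ⟨x₀, hx₀A, hx₀max⟩ := Finset.exists_max_image A nn ⟨0, hA0⟩
  have t₀ : Fin T := ⟨0, hT⟩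
  have hmiss : Function.update x₀ t₀ (x₀ t₀ + 1) ∉ A := by
    intro hmem
    have := hx₀max _ hmem
    rw [nn_update] at this
    omega
  apply Finset.sum_lt_sum_of_subset (Finset.filter_subset _ _)
    (i := (x₀, t₀))
  · simp [hx₀A]
  · simp only [Finset.mem_filter]
    intro h
    exact hmiss h.2
  · exact mul_pos (mul_pos (mul_pos hlam (hr t₀)) (aa_pos hlam hr x₀)) (pow_pos hp _)
  · intro q hq _
    exact (mul_pos (mul_pos (mul_pos hlam (hr q.2)) (aa_pos hlam hr q.1)) (pow_pos hp _)).le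

/-- The non-propagation probability `p ↦ exp(−λp) * F(p)` is
strictly decreasing on `[0,∞)`; equivalently, the expected cost
`U_OFF(p) = K * (1 − exp(−λp) * F(p))` of playing OFF is strictly increasing
in the population profile `p` on `[0,∞)`. -/
theorem UOFF_strictMono (T : ℕ) (hT : 1 ≤ T)
    (lam : ℝ) (hlam : 0 < lam)
    (r : Fin T → ℝ) (hr : ∀ t, 0 < r t) (hrsum : ∑ t, r t = 1)
    (τ : Fin T → ℝ) (hτ : ∀ t, 0 < τ t)
    (K : ℝ) (hK : 0 < K)
    (S : Set (Fin T → ℕ))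
    (hSdef : S = {x : Fin T → ℕ | ∑ t, (x t : ℝ) * τ t / (1 + τ t) < 1})
    (hSfin : S.Finite)
    (F : ℝ → ℝ)
    (hF : ∀ p : ℝ, F p =
      ∑ x ∈ hSfin.toFinset, ∏ t, (lam * r t * p) ^ (x t) / (Nat.factorial (x t) : ℝ))
    (UOFF : ℝ → ℝ)
    (hUOFF : ∀ p : ℝ, UOFF p = K * (1 - Real.exp (-(lam * p)) * F p)) :
    StrictAntiOn (fun p : ℝ => Real.exp (-(lam * p)) * F p) (Set.Ici (0 : ℝ)) ∧
    StrictMonoOn UOFF (Set.Ici (0 : ℝ)) := by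
  classical
  set A : Finset (Fin T → ℕ) := hSfin.toFinset with hA
  have hmemA : ∀ x : Fin T → ℕ, x ∈ A ↔ ∑ t, (x t : ℝ) * τ t / (1 + τ t) < 1 := by
    intro x
    rw [hA, Set.Finite.mem_toFinset, hSdef]
    rfl
  have hA0 : (0 : Fin T → ℕ) ∈ A := by
    rw [hmemA]
    simp
  have hdc : ∀ x ∈ A, ∀ t : Fin T, x t ≠ 0 → Function.update x t (x t - 1) ∈ A := by
    intro x hx t _
    rw [hmemA] at hx ⊢
    refine lt_of_le_of_lt ?_ hx
    apply Finset.sum_le_sum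
    intro s _
    have h1 : (0:ℝ) < 1 + τ s := by have := hτ s; linarith
    have h2 : (0:ℝ) ≤ τ s := (hτ s).le
    have h3 : ((Function.update x t (x t - 1) s : ℕ) : ℝ) ≤ (x s : ℝ) := by
      by_cases h : s = t
      · subst h; simp only [Function.update_self]
        exact_mod_cast Nat.sub_le _ _
      · simp [Function.update_apply, h]
    gcongr
  -- F equals polynomial
  have hFF : ∀ p : ℝ, F p = ∑ x ∈ A, aa lam r x * p ^ nn x := by
    intro p
    rw [hF]
    apply Finset.sum_congr rfl
    intro x _
    have h1 : ∀ t : Fin T, (lam * r t * p) ^ (x t) / (Nat.factorial (x t) : ℝ)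
        = ((lam * r t) ^ (x t) / (Nat.factorial (x t) : ℝ)) * p ^ (x t) := by
      intro t; rw [mul_pow]; ring
    rw [Finset.prod_congr rfl (fun t _ => h1 t), Finset.prod_mul_distrib,
      Finset.prod_pow_eq_pow_sum]
    rfl
  set G : ℝ → ℝ := fun p : ℝ => Real.exp (-(lam * p)) * F p with hGdef
  have hGeq : G = fun p : ℝ => Real.exp (-(lam * p)) * ∑ x ∈ A, aa lam r x * p ^ nn x := by
    funext p
    rw [hGdef]
    simp only
    rw [hFF]
  have hderivFF : ∀ p : ℝ, HasDerivAt (fun p : ℝ => ∑ x ∈ A, aa lam r x * p ^ nn x)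
      (∑ x ∈ A, aa lam r x * ((nn x : ℝ) * p ^ (nn x - 1))) p := by
    intro p
    apply HasDerivAt.fun_sum
    intro x _
    exact (hasDerivAt_pow (nn x) p).const_mul _
  have hderivexp : ∀ p : ℝ, HasDerivAt (fun p : ℝ => Real.exp (-(lam * p)))
      (-lam * Real.exp (-(lam * p))) p := by
    intro p
    have h1 : HasDerivAt (fun p : ℝ => -(lam * p)) (-lam) p := by
      simpa using ((hasDerivAt_id p).const_mul lam).fun_neg
    simpa [mul_comm] using h1.exp
  have hderivG : ∀ p : ℝ, HasDerivAt G
      (-lam * Real.exp (-(lam * p)) * (∑ x ∈ A, aa lam r x * p ^ nn x)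
        + Real.exp (-(lam * p)) * ∑ x ∈ A, aa lam r x * ((nn x : ℝ) * p ^ (nn x - 1))) p := by
    intro p
    rw [hGeq]
    exact (hderivexp p).mul (hderivFF p)
  have hGanti : StrictAntiOn G (Set.Ici (0 : ℝ)) := by
    apply strictAntiOn_of_deriv_neg (convex_Ici 0)
    · intro p _
      exact (hderivG p).continuousAt.continuousWithinAt
    · intro p hp
      rw [interior_Ici] at hp
      rw [(hderivG p).deriv]
      have hkey := key_ineq hT hlam hr hrsum A hA0 hdc (p := p) hp
      have hexp : (0:ℝ) < Real.exp (-(lam * p)) := Real.exp_pos _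
      nlinarith [hkey, hexp]
  constructor
  · exact hGanti
  · intro a ha b hb hab
    rw [hUOFF a, hUOFF b]
    have := hGanti ha hb hab
    have h1 : G b < G a := this
    have h2 : Real.exp (-(lam * b)) * F b < Real.exp (-(lam * a)) * F a := h1
    nlinarith
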